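/- Let G be a finite connected simple graph with vertex set V, r ∈ V a distinguished root, and B ⊆ V a set of Byzantine vertices with r ∉ B. Set R = B ∪ {r} and suppose H : V → ℕ satisfies the 'min+1' recurrence with respect to R: H(v) = 0 for every v ∈ R, and H(v) = 1 + min{H(u) : u a neighbor of v} for every v ∉ R. If a vertex v ≠ r lies outside the containment zone S_B (i.e. d(v,b) > d(r,v) for every b ∈ B) and u is any neighbor of v achieving min{H(w) : w a neighbor of v}, then d(r,u) = d(r,v) − 1, H(u) = H(v) − 1, and u lies outside S_B. -/

import Mathlib

private lemma aux_H_le_dist {V : Type*} (G : SimpleGraph V) (hG : G.Connected)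
    (R : Set V) (H : V → ℕ)
    (hroot : ∀ v ∈ R, H v = 0)
    (hmin : ∀ v ∉ R, H v = 1 + sInf (H '' (G.neighborSet v))) :
    ∀ n w x, x ∈ R → G.dist w x ≤ n → H w ≤ G.dist w x := by
  intro n
  induction n with
  | zero =>
    intro w x hx h
    have h0 : G.dist w x = 0 := Nat.le_zero.mp h
    have hwx : w = x := ((hG w x).dist_eq_zero_iff).mp h0
    simp [hwx, hroot x hx]
  | succ n ih =>
    intro w x hx h
    by_cases hw : w ∈ R
    · simp [hroot w hw]
    · have hwx : w ≠ x := fun he => hw (he ▸ hx)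
      obtain ⟨p, hp⟩ := (hG w x).exists_walk_length_eq_dist
      cases p with
      | nil => exact absurd rfl hwx
      | cons hadj q =>
        rename_i w'
        have hq : G.dist w' x ≤ q.length := SimpleGraph.dist_le q
        have hlen : q.length + 1 = G.dist w x := by simpa using hp
        have hq' : G.dist w' x ≤ n := by omega
        have hHw' : H w' ≤ G.dist w' x := ih w' x hx hq'
        have hmem : H w' ∈ H '' (G.neighborSet w) :=
          ⟨w', hadj, rfl⟩
        have : sInf (H '' (G.neighborSet w)) ≤ H w' := Nat.sInf_le hmem
        have := hmin w hw
        omega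

private lemma aux_exists_close {V : Type*} (G : SimpleGraph V) (hG : G.Connected)
    (R : Set V) (H : V → ℕ)
    (hnb : ∀ w : V, (G.neighborSet w).Nonempty)
    (hmin : ∀ v ∉ R, H v = 1 + sInf (H '' (G.neighborSet v))) :
    ∀ n w, H w ≤ n → ∃ x ∈ R, G.dist w x ≤ H w := by
  intro n
  induction n with
  | zero =>
    intro w hw
    by_cases hwR : w ∈ R
    · exact ⟨w, hwR, by rw [SimpleGraph.dist_self]; exact Nat.zero_le _⟩
    · have := hmin w hwR
      omega
  | succ n ih =>
    intro w hw
    by_cases hwR : w ∈ R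
    · exact ⟨w, hwR, by rw [SimpleGraph.dist_self]; exact Nat.zero_le _⟩
    · have hS : (H '' (G.neighborSet w)).Nonempty := (hnb w).image H
      obtain ⟨w', hw', hHw'⟩ := (Nat.sInf_mem hS : sInf (H '' (G.neighborSet w)) ∈ _)
      have hHw : H w = 1 + H w' := by rw [hmin w hwR, hHw']
      obtain ⟨x, hx, hdx⟩ := ih w' (by omega)
      refine ⟨x, hx, ?_⟩
      have htri : G.dist w x ≤ G.dist w w' + G.dist w' x := hG.dist_triangle
      have h1 : G.dist w w' = 1 := SimpleGraph.dist_eq_one_iff_adj.mpr hw'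
      omega

/-- Suppose `H` satisfies the `min+1` recurrence with respect to `R = B ∪ {r}`. If `v ≠ r`
lies outside the containment zone `S_B` and `u` is any neighbor of `v` achieving the minimal
height among the neighbors of `v`, then `d(r,u) = d(r,v) - 1`, `H u = H v - 1`, and `u` also
lies outside `S_B`. -/
theorem minPlusOne_min_neighbor_outside_SB
    {V : Type*} [Fintype V] (G : SimpleGraph V) (hG : G.Connected) (r : V)
    (B : Set V) (hrB : r ∉ B)
    (H : V → ℕ)
    (hroot : ∀ v ∈ B ∪ {r}, H v = 0)
    (hmin : ∀ v ∉ B ∪ {r}, H v = 1 + sInf (H '' (G.neighborSet v)))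
    (v u : V) (hv : v ≠ r)
    (hvout : ∀ b ∈ B, G.dist r v < G.dist v b)
    (hadj : G.Adj v u) (hu : H u = sInf (H '' (G.neighborSet v))) :
    G.dist r u = G.dist r v - 1 ∧ H u = H v - 1 ∧
      ∀ b ∈ B, G.dist r u < G.dist u b := by
  -- every vertex has a neighbor
  have hnb : ∀ w : V, (G.neighborSet w).Nonempty := by
    intro w
    have hne : ∃ y : V, y ≠ w := by
      by_cases hwr : w = r
      · exact ⟨v, by simpa [hwr] using hv⟩
      · exact ⟨r, fun h => hwr h.symm⟩
    obtain ⟨y, hy⟩ := hne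
    have hd : G.dist w y ≠ 0 :=
      SimpleGraph.dist_ne_zero_iff_ne_and_reachable.mpr ⟨fun h => hy h.symm, hG w y⟩
    obtain ⟨p, hp⟩ := (hG w y).exists_walk_length_eq_dist
    cases p with
    | nil => simp at hp; exact (hd SimpleGraph.dist_self).elim
    | cons hadj' q => exact ⟨_, hadj'⟩
  -- v ∉ B ∪ {r}
  have hvR : v ∉ B ∪ {r} := by
    intro hmem
    rcases hmem with hvB | hvr
    · have := hvout v hvB
      rw [SimpleGraph.dist_self] at this; omega
    · exact hv hvr
  have hHv : H v = 1 + H u := by rw [hmin v hvR, hu]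
  -- H v ≤ dist v r
  have hle : ∀ w x, x ∈ B ∪ {r} → H w ≤ G.dist w x := by
    intro w x hx
    exact aux_H_le_dist G hG (B ∪ {r}) H hroot hmin (G.dist w x) w x hx le_rfl
  have hHvle : H v ≤ G.dist v r := hle v r (by simp)
  -- dist v r ≤ H v
  have hclose : ∀ w, ∃ x ∈ B ∪ {r}, G.dist w x ≤ H w := fun w =>
    aux_exists_close G hG (B ∪ {r}) H hnb hmin (H w) w le_rfl
  have hdist_comm : ∀ a b : V, G.dist a b = G.dist b a := fun a b => SimpleGraph.dist_comm
  have hHvge : G.dist v r ≤ H v := by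
    obtain ⟨x, hx, hdx⟩ := hclose v
    rcases hx with hxB | hxr
    · exfalso
      have h1 := hvout x hxB
      rw [hdist_comm r v] at h1
      omega
    · simp at hxr; subst hxr; exact hdx
  have hHveq : H v = G.dist r v := by rw [hdist_comm r v]; omega
  -- bounds on u
  have hHule : H u ≤ G.dist u r := hle u r (by simp)
  have hub : ∀ b ∈ B, H u < G.dist u b := by
    intro b hb
    have h1 := hvout b hb
    have htri : G.dist v b ≤ G.dist v u + G.dist u b := hG.dist_triangle
    have h2 : G.dist v u = 1 := SimpleGraph.dist_eq_one_iff_adj.mpr hadj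
    omega
  have hHuge : G.dist u r ≤ H u := by
    obtain ⟨x, hx, hdx⟩ := hclose u
    rcases hx with hxB | hxr
    · exfalso
      have := hub x hxB
      omega
    · simp at hxr; subst hxr; exact hdx
  have hHueq : G.dist r u = H u := by rw [hdist_comm r u]; omega
  refine ⟨by omega, by omega, ?_⟩
  intro b hb
  have := hub b hb
  omega
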